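/- Let X₁,…,Xₙ, Y, Z₁,…,Z_m, W be Banach spaces, let R : Z₁ × ⋯ × Z_m → X₁ ⊗̂_π ⋯ ⊗̂_π Xₙ be a bounded multilinear operator whose associated Σ-operator maps Σ_{Z₁,…,Z_m} into Σ_{X₁,…,Xₙ} (i.e. R sends m-tuples to decomposable tensors), and let S : Y → W be a bounded linear operator. If T ∈ Γ(X₁,…,Xₙ;Y), then the bounded multilinear operator S ∘ f_T ∘ R : Z₁ × ⋯ × Z_m → W belongs to Γ(Z₁,…,Z_m;W) and Γ(S f_T R) ≤ ‖R‖ · Γ(T) · ‖S‖. -/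

import Mathlib

open scoped NNReal

noncomputable section

universe u

variable (𝕜 : Type u) [RCLike 𝕜]

/-- A factorization of the bounded multilinear operator `T` through a Hilbert space:
a Hilbert space `H`, a bounded multilinear operator `A` into `H`, and a Lipschitz map `B`
defined on the image of `A`, such that `T = B ∘ A`. -/
structure HilbertFactorization {n : ℕ} {X : Fin n → Type u} {Y : Type u}
    [∀ i, NormedAddCommGroup (X i)] [∀ i, NormedSpace 𝕜 (X i)]
    [NormedAddCommGroup Y] [NormedSpace 𝕜 Y]
    (T : ContinuousMultilinearMap 𝕜 X Y) where
  H : Type u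
  [instNormed : NormedAddCommGroup H]
  [instInner : InnerProductSpace 𝕜 H]
  [instComplete : CompleteSpace H]
  A : ContinuousMultilinearMap 𝕜 X H
  B : H → Y
  K : ℝ≥0
  lipschitz : LipschitzOnWith K B (Set.range fun x => A x)
  factors : ∀ x, T x = B (A x)

attribute [instance] HilbertFactorization.instNormed HilbertFactorization.instInner
  HilbertFactorization.instComplete

variable {𝕜}

/-- `T` factors through a Hilbert space. -/
def FactorsThroughHilbert {n : ℕ} {X : Fin n → Type u} {Y : Type u}
    [∀ i, NormedAddCommGroup (X i)] [∀ i, NormedSpace 𝕜 (X i)]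
    [NormedAddCommGroup Y] [NormedSpace 𝕜 Y]
    (T : ContinuousMultilinearMap 𝕜 X Y) : Prop :=
  Nonempty (HilbertFactorization 𝕜 T)

/-- The constant `Γ(T)`: the infimum of `‖A‖ · Lip(B)` over all factorizations of `T`
through a Hilbert space. -/
def gammaNorm {n : ℕ} {X : Fin n → Type u} {Y : Type u}
    [∀ i, NormedAddCommGroup (X i)] [∀ i, NormedSpace 𝕜 (X i)]
    [NormedAddCommGroup Y] [NormedSpace 𝕜 Y]
    (T : ContinuousMultilinearMap 𝕜 X Y) : ℝ :=
  sInf {c : ℝ | ∃ F : HilbertFactorization 𝕜 T, c = ‖F.A‖ * (F.K : ℝ)}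

open scoped TensorProduct
open PiTensorProduct

/-- Let `X₁,…,Xₙ, Y, Z₁,…,Z_m, W` be Banach spaces, let
`R : Z₁ × ⋯ × Z_m → X₁ ⊗̂_π ⋯ ⊗̂_π Xₙ` be a bounded multilinear operator (bounded for the
projective norm, with bound `C`) mapping tuples to decomposable tensors, and let
`S : Y → W` be a bounded linear operator.  If `T ∈ Γ(X₁,…,Xₙ;Y)`, then the bounded
multilinear operator `S ∘ f_T ∘ R : Z₁ × ⋯ × Z_m → W` (where `f_T` is the `Σ`-operator of
`T`, i.e. the linearization of `T` on tensors) belongs to `Γ(Z₁,…,Z_m;W)` and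
`Γ(S f_T R) ≤ C · Γ(T) · ‖S‖`; taking the infimum over admissible bounds `C` gives
`Γ(S f_T R) ≤ ‖R‖ · Γ(T) · ‖S‖`. -/
theorem comp_sigmaOperator_factorsThroughHilbert {n m : ℕ}
    (hn : 0 < n) (hm : 0 < m)
    {X : Fin n → Type u} {Y : Type u} {Z : Fin m → Type u} {W : Type u}
    [∀ i, NormedAddCommGroup (X i)] [∀ i, NormedSpace 𝕜 (X i)] [∀ i, CompleteSpace (X i)]
    [NormedAddCommGroup Y] [NormedSpace 𝕜 Y] [CompleteSpace Y]
    [∀ i, NormedAddCommGroup (Z i)] [∀ i, NormedSpace 𝕜 (Z i)] [∀ i, CompleteSpace (Z i)]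
    [NormedAddCommGroup W] [NormedSpace 𝕜 W] [CompleteSpace W]
    (T : ContinuousMultilinearMap 𝕜 X Y) (hT : FactorsThroughHilbert T)
    (R : MultilinearMap 𝕜 Z (⨂[𝕜] i, X i)) (C : ℝ) (hC : 0 ≤ C)
    (hR : ∀ z : ∀ i, Z i, projectiveSeminorm (R z) ≤ C * ∏ i, ‖z i‖)
    (hdec : ∀ z : ∀ i, Z i, ∃ x : ∀ i, X i, R z = ⨂ₜ[𝕜] i, x i)
    (S : Y →L[𝕜] W) :
    ∃ N : ContinuousMultilinearMap 𝕜 Z W,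
      (∀ z, N z = S (PiTensorProduct.lift T.toMultilinearMap (R z))) ∧
      FactorsThroughHilbert N ∧ gammaNorm N ≤ C * gammaNorm T * ‖S‖ := by
  classical
  -- the multilinear map N₀ = S ∘ (lift T) ∘ R and its bound
  set N0 : MultilinearMap 𝕜 Z W :=
    ((S : Y →ₗ[𝕜] W).comp (PiTensorProduct.lift T.toMultilinearMap)).compMultilinearMap R with hN0def
  have hN0 : ∀ z : ∀ i, Z i, ‖N0 z‖ ≤ (‖S‖ * ‖T‖ * C) * ∏ i, ‖z i‖ := by
    intro z
    have h1 : ‖N0 z‖ ≤ ‖S‖ * ‖PiTensorProduct.lift T.toMultilinearMap (R z)‖ :=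
      S.le_opNorm _
    have h2 : ‖PiTensorProduct.lift T.toMultilinearMap (R z)‖ ≤
        projectiveSeminorm (R z) * ‖T‖ :=
      (norm_eval_le_projectiveSeminorm T (R z)).trans_eq (mul_comm _ _)
    have h3 := hR z
    calc ‖N0 z‖ ≤ ‖S‖ * (projectiveSeminorm (R z) * ‖T‖) := by
          refine h1.trans ?_
          exact mul_le_mul_of_nonneg_left h2 (norm_nonneg S)
      _ ≤ ‖S‖ * ((C * ∏ i, ‖z i‖) * ‖T‖) := by
          refine mul_le_mul_of_nonneg_left ?_ (norm_nonneg S)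
          exact mul_le_mul_of_nonneg_right h3 (norm_nonneg T)
      _ = (‖S‖ * ‖T‖ * C) * ∏ i, ‖z i‖ := by ring
  refine ⟨N0.mkContinuous _ hN0, fun z => rfl, ?_, ?_⟩
  -- construction of a factorization of N from a factorization of T
  · obtain ⟨F⟩ := hT
    refine ⟨?_⟩
    set A0 : MultilinearMap 𝕜 Z F.H :=
      (PiTensorProduct.lift F.A.toMultilinearMap).compMultilinearMap R with hA0def
    have hA0 : ∀ z : ∀ i, Z i, ‖A0 z‖ ≤ (‖F.A‖ * C) * ∏ i, ‖z i‖ := by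
      intro z
      have h2 : ‖PiTensorProduct.lift F.A.toMultilinearMap (R z)‖ ≤
          projectiveSeminorm (R z) * ‖F.A‖ :=
        (norm_eval_le_projectiveSeminorm F.A (R z)).trans_eq (mul_comm _ _)
      calc ‖A0 z‖ ≤ projectiveSeminorm (R z) * ‖F.A‖ := h2
        _ ≤ (C * ∏ i, ‖z i‖) * ‖F.A‖ :=
            mul_le_mul_of_nonneg_right (hR z) (norm_nonneg F.A)
        _ = (‖F.A‖ * C) * ∏ i, ‖z i‖ := by ring
    refine ⟨F.H, A0.mkContinuous _ hA0, S ∘ F.B, ‖S‖₊ * F.K, ?_, ?_⟩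
    · refine LipschitzWith.comp_lipschitzOnWith S.lipschitz (F.lipschitz.mono ?_)
      rintro _ ⟨z, rfl⟩
      obtain ⟨x, hx⟩ := hdec z
      refine ⟨x, ?_⟩
      simp [hA0def, hx]
    · intro z
      obtain ⟨x, hx⟩ := hdec z
      simp [hN0def, hA0def, hx, F.factors x]
  -- the norm estimate
  · have hbdd : ∀ (T' : ContinuousMultilinearMap 𝕜 X Y),
        BddBelow {c : ℝ | ∃ F : HilbertFactorization 𝕜 T', c = ‖F.A‖ * (F.K : ℝ)} := by
      intro T'
      exact ⟨0, by rintro c ⟨F, rfl⟩; positivity⟩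
    have key : ∀ c ∈ {c : ℝ | ∃ F : HilbertFactorization 𝕜 T, c = ‖F.A‖ * (F.K : ℝ)},
        gammaNorm (N0.mkContinuous _ hN0) ≤ C * c * ‖S‖ := by
      rintro _ ⟨F, rfl⟩
      set A0 : MultilinearMap 𝕜 Z F.H :=
        (PiTensorProduct.lift F.A.toMultilinearMap).compMultilinearMap R with hA0def
      have hA0 : ∀ z : ∀ i, Z i, ‖A0 z‖ ≤ (‖F.A‖ * C) * ∏ i, ‖z i‖ := by
        intro z
        have h2 : ‖PiTensorProduct.lift F.A.toMultilinearMap (R z)‖ ≤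
            projectiveSeminorm (R z) * ‖F.A‖ :=
          (norm_eval_le_projectiveSeminorm F.A (R z)).trans_eq (mul_comm _ _)
        calc ‖A0 z‖ ≤ projectiveSeminorm (R z) * ‖F.A‖ := h2
          _ ≤ (C * ∏ i, ‖z i‖) * ‖F.A‖ :=
              mul_le_mul_of_nonneg_right (hR z) (norm_nonneg F.A)
          _ = (‖F.A‖ * C) * ∏ i, ‖z i‖ := by ring
      have hlip : LipschitzOnWith (‖S‖₊ * F.K) (S ∘ F.B)
          (Set.range fun z => (A0.mkContinuous _ hA0) z) := by
        refine LipschitzWith.comp_lipschitzOnWith S.lipschitz (F.lipschitz.mono ?_)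
        rintro _ ⟨z, rfl⟩
        obtain ⟨x, hx⟩ := hdec z
        refine ⟨x, ?_⟩
        simp [hA0def, hx]
      have hfac : ∀ z, (N0.mkContinuous _ hN0) z = (S ∘ F.B) ((A0.mkContinuous _ hA0) z) := by
        intro z
        obtain ⟨x, hx⟩ := hdec z
        simp [hN0def, hA0def, hx, F.factors x]
      set F' : HilbertFactorization 𝕜 (N0.mkContinuous _ hN0) :=
        ⟨F.H, A0.mkContinuous _ hA0, S ∘ F.B, ‖S‖₊ * F.K, hlip, hfac⟩ with hF'def
      have hmem : ‖F'.A‖ * ((F'.K : ℝ)) ∈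
          {c : ℝ | ∃ G : HilbertFactorization 𝕜 (N0.mkContinuous _ hN0),
            c = ‖G.A‖ * (G.K : ℝ)} := ⟨F', rfl⟩
      have h1 : gammaNorm (N0.mkContinuous _ hN0) ≤ ‖F'.A‖ * ((F'.K : ℝ)) :=
        csInf_le ⟨0, by rintro c ⟨G, rfl⟩; positivity⟩ hmem
      refine h1.trans ?_
      have hAnorm : ‖F'.A‖ ≤ ‖F.A‖ * C := by
        have := A0.mkContinuous_norm_le (by positivity) hA0
        simpa [hF'def] using this
      have hK : ((F'.K : ℝ)) = ‖S‖ * (F.K : ℝ) := by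
        simp [hF'def, NNReal.coe_mul]
      rw [hK]
      calc ‖F'.A‖ * (‖S‖ * (F.K : ℝ)) ≤ (‖F.A‖ * C) * (‖S‖ * (F.K : ℝ)) := by
            refine mul_le_mul_of_nonneg_right hAnorm (by positivity)
        _ = C * (‖F.A‖ * (F.K : ℝ)) * ‖S‖ := by ring
    -- from key, conclude
    obtain ⟨F₀⟩ := hT
    have hne : {c : ℝ | ∃ F : HilbertFactorization 𝕜 T, c = ‖F.A‖ * (F.K : ℝ)}.Nonempty :=
      ⟨_, F₀, rfl⟩
    rcases eq_or_lt_of_le (by positivity : (0:ℝ) ≤ C * ‖S‖) with h0 | hpos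
    · have h1 : gammaNorm (N0.mkContinuous _ hN0) ≤ 0 := by
        have := key _ ⟨F₀, rfl⟩
        calc gammaNorm (N0.mkContinuous _ hN0) ≤ C * (‖F₀.A‖ * (F₀.K : ℝ)) * ‖S‖ := this
          _ = (C * ‖S‖) * (‖F₀.A‖ * (F₀.K : ℝ)) := by ring
          _ = 0 := by rw [← h0]; ring
      have h2 : 0 ≤ C * gammaNorm T * ‖S‖ := by
        have hg : 0 ≤ gammaNorm T := le_csInf hne (by rintro c ⟨F, rfl⟩; positivity)
        positivity
      linarith
    · have hdiv : gammaNorm (N0.mkContinuous _ hN0) / (C * ‖S‖) ≤ gammaNorm T := by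
        refine le_csInf hne ?_
        intro c hc
        rw [div_le_iff₀ hpos]
        calc gammaNorm (N0.mkContinuous _ hN0) ≤ C * c * ‖S‖ := key c hc
          _ = c * (C * ‖S‖) := by ring
      have := (div_le_iff₀ hpos).mp hdiv
      calc gammaNorm (N0.mkContinuous _ hN0) ≤ gammaNorm T * (C * ‖S‖) := this
        _ = C * gammaNorm T * ‖S‖ := by ring
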